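/- arXiv:2201.03126 — 3 statements merged into one kernel-verified Lean document; each statement's English description precedes it below -/
import Mathlib

section
/- For all real t and φ > 0 with k ≤ n, the moment generating function of the spillage distribution satisfies m(t) := ∑_{r=0}^{n-k} e^{tr} · Spillage(r | n, k, φ) = e^{t(n-k)} · ∑_{ℓ=0}^{n-k} C(n, ℓ) · (e^{-t} - 1)^ℓ · H_ℓ, where H_ℓ = φ^ℓ · S(n-ℓ, k, φ)/S(n, k, φ). -/
open Finset Filter Real

/-- Central Stirling numbers of the second kind. -/
def stirling2 : ℕ → ℕ → ℕ
  | 0, 0 => 1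
  | 0, _ + 1 => 0
  | _ + 1, 0 => 0
  | n + 1, k + 1 => (k + 1) * stirling2 n (k + 1) + stirling2 n k

/-- Noncentral Stirling numbers of the second kind. -/
noncomputable def ncS (n k : ℕ) (φ : ℝ) : ℝ :=
  ∑ j ∈ Finset.range (n + 1), (n.choose j : ℝ) * φ ^ (n - j) * (stirling2 j k : ℝ)

/-- Spillage mass function. -/
noncomputable def spillage (r n k : ℕ) (φ : ℝ) : ℝ :=
  (n.choose (k + r) : ℝ) * φ ^ (n - k - r) * (stirling2 (k + r) k : ℝ) / ncS n k φ

lemma stirling2_eq_zero_of_lt : ∀ {n k : ℕ}, n < k → stirling2 n k = 0 := by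
  intro n
  induction n with
  | zero => intro k h; match k, h with | k+1, _ => rfl
  | succ m ih =>
    intro k h
    match k, h with
    | k+1, h =>
      show (k + 1) * stirling2 m (k + 1) + stirling2 m k = 0
      rw [ih (by omega), ih (by omega)]
      simp

lemma ncS_eq_zero_of_lt {m k : ℕ} (h : m < k) (φ : ℝ) : ncS m k φ = 0 := by
  unfold ncS
  apply Finset.sum_eq_zero
  intro j hj
  simp only [Finset.mem_range] at hj
  rw [stirling2_eq_zero_of_lt (by omega)]
  simp

lemma sum_extend {f : ℕ → ℝ} {a b : ℕ} (h : a ≤ b)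
    (h0 : ∀ i, a ≤ i → i < b → f i = 0) :
    ∑ i ∈ Finset.range a, f i = ∑ i ∈ Finset.range b, f i := by
  apply Finset.sum_subset (Finset.range_subset_range.2 h)
  intro i hi hi'
  simp only [Finset.mem_range] at hi hi'
  exact h0 i (by omega) hi

-- Key choose identity
lemma choose_swap {n ℓ j : ℕ} (h : ℓ + j ≤ n) :
    n.choose ℓ * (n - ℓ).choose j = n.choose j * (n - j).choose ℓ := by
  have h1 := Nat.choose_mul (k := ℓ + j) (n := n) (s := ℓ) (Nat.le_add_right _ _)
  have h2 := Nat.choose_mul (k := ℓ + j) (n := n) (s := j) (Nat.le_add_left _ _)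
  rw [Nat.add_sub_cancel_left] at h1
  rw [Nat.add_sub_cancel] at h2
  rw [← h1, ← h2, Nat.choose_symm_add]

/-- Key identity: binomial transform of noncentral Stirling numbers. -/
lemma ncS_binomial (n k : ℕ) (hk : k ≤ n) (y φ : ℝ) :
    ∑ ℓ ∈ Finset.range (n - k + 1),
      (n.choose ℓ : ℝ) * y ^ ℓ * (φ ^ ℓ * ncS (n - ℓ) k φ) = ncS n k ((y + 1) * φ) := by
  calc ∑ ℓ ∈ Finset.range (n - k + 1),
        (n.choose ℓ : ℝ) * y ^ ℓ * (φ ^ ℓ * ncS (n - ℓ) k φ)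
      = ∑ ℓ ∈ Finset.range (n + 1),
        (n.choose ℓ : ℝ) * y ^ ℓ * (φ ^ ℓ * ncS (n - ℓ) k φ) := by
        apply sum_extend (by omega)
        intro ℓ h1 h2
        rw [ncS_eq_zero_of_lt (by omega)]
        ring
    _ = ∑ ℓ ∈ Finset.range (n + 1), ∑ j ∈ Finset.range (n + 1),
        (n.choose ℓ : ℝ) * y ^ ℓ * φ ^ ℓ * (((n - ℓ).choose j : ℝ) * φ ^ (n - ℓ - j) *
          (stirling2 j k : ℝ)) := by
        apply Finset.sum_congr rfl
        intro ℓ hℓ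
        simp only [Finset.mem_range] at hℓ
        unfold ncS
        rw [show (n.choose ℓ : ℝ) * y ^ ℓ *
            (φ ^ ℓ * ∑ j ∈ Finset.range (n - ℓ + 1),
              ((n - ℓ).choose j : ℝ) * φ ^ (n - ℓ - j) * (stirling2 j k : ℝ)) =
            ∑ j ∈ Finset.range (n - ℓ + 1),
              (n.choose ℓ : ℝ) * y ^ ℓ * φ ^ ℓ * (((n - ℓ).choose j : ℝ) *
                φ ^ (n - ℓ - j) * (stirling2 j k : ℝ)) from by
          rw [Finset.mul_sum, Finset.mul_sum]
          apply Finset.sum_congr rfl; intro j _; ring]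
        apply sum_extend (by omega)
        intro j h1 h2
        rw [Nat.choose_eq_zero_of_lt (show n - ℓ < j by omega)]
        push_cast
        ring
    _ = ∑ j ∈ Finset.range (n + 1), ∑ ℓ ∈ Finset.range (n + 1),
        (n.choose j : ℝ) * (((n - j).choose ℓ : ℝ) * y ^ ℓ) * φ ^ (n - j) *
          (stirling2 j k : ℝ) := by
        rw [Finset.sum_comm]
        apply Finset.sum_congr rfl; intro j hj
        apply Finset.sum_congr rfl; intro ℓ hℓ
        simp only [Finset.mem_range] at hj hℓ
        by_cases h : ℓ + j ≤ n
        · have hc : ((n.choose ℓ : ℕ) : ℝ) * ((n - ℓ).choose j : ℝ) =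
              (n.choose j : ℝ) * ((n - j).choose ℓ : ℝ) := by
            exact_mod_cast congrArg Nat.cast (choose_swap h)
          have hφ : φ ^ ℓ * φ ^ (n - ℓ - j) = φ ^ (n - j) := by
            rw [← pow_add]; congr 1; omega
          calc (n.choose ℓ : ℝ) * y ^ ℓ * φ ^ ℓ * (((n - ℓ).choose j : ℝ) *
                φ ^ (n - ℓ - j) * (stirling2 j k : ℝ))
              = ((n.choose ℓ : ℝ) * ((n - ℓ).choose j : ℝ)) * y ^ ℓ *
                  (φ ^ ℓ * φ ^ (n - ℓ - j)) * (stirling2 j k : ℝ) := by ring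
            _ = ((n.choose j : ℝ) * ((n - j).choose ℓ : ℝ)) * y ^ ℓ * φ ^ (n - j) *
                  (stirling2 j k : ℝ) := by rw [hc, hφ]
            _ = _ := by ring
        · rw [Nat.choose_eq_zero_of_lt (show n - ℓ < j by omega),
            Nat.choose_eq_zero_of_lt (show n - j < ℓ by omega)]
          push_cast
          ring
    _ = ncS n k ((y + 1) * φ) := by
        unfold ncS
        apply Finset.sum_congr rfl
        intro j hj
        simp only [Finset.mem_range] at hj
        calc ∑ ℓ ∈ Finset.range (n + 1),
              (n.choose j : ℝ) * (((n - j).choose ℓ : ℝ) * y ^ ℓ) * φ ^ (n - j) *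
                (stirling2 j k : ℝ)
            = ∑ ℓ ∈ Finset.range (n - j + 1),
              (n.choose j : ℝ) * (((n - j).choose ℓ : ℝ) * y ^ ℓ) * φ ^ (n - j) *
                (stirling2 j k : ℝ) := by
              refine (sum_extend (by omega) ?_).symm
              intro ℓ h1 h2
              rw [Nat.choose_eq_zero_of_lt (show n - j < ℓ by omega)]
              push_cast
              ring
          _ = (∑ ℓ ∈ Finset.range (n - j + 1),
                y ^ ℓ * 1 ^ (n - j - ℓ) * ((n - j).choose ℓ : ℝ)) *
                ((n.choose j : ℝ) * φ ^ (n - j) * (stirling2 j k : ℝ)) := by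
              rw [Finset.sum_mul]
              apply Finset.sum_congr rfl
              intro ℓ _
              push_cast
              ring
          _ = (y + 1) ^ (n - j) * ((n.choose j : ℝ) * φ ^ (n - j) * (stirling2 j k : ℝ)) := by
              rw [add_pow]
          _ = (n.choose j : ℝ) * ((y + 1) * φ) ^ (n - j) * (stirling2 j k : ℝ) := by
              rw [mul_pow]
              ring

/-- Reindexing: the numerator sum equals ncS evaluated at ψ. -/
lemma spillage_num_sum (n k : ℕ) (hk : k ≤ n) (ψ : ℝ) :
    ∑ r ∈ Finset.range (n - k + 1),
      (n.choose (k + r) : ℝ) * ψ ^ (n - k - r) * (stirling2 (k + r) k : ℝ) = ncS n k ψ := by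
  unfold ncS
  conv_rhs => rw [show n + 1 = k + (n - k + 1) by omega, Finset.sum_range_add]
  have h0 : ∑ j ∈ Finset.range k, (n.choose j : ℝ) * ψ ^ (n - j) * (stirling2 j k : ℝ) = 0 := by
    apply Finset.sum_eq_zero
    intro j hj
    simp only [Finset.mem_range] at hj
    rw [stirling2_eq_zero_of_lt (by omega)]
    simp
  rw [h0, zero_add]
  apply Finset.sum_congr rfl
  intro r hr
  rw [Nat.sub_sub]

theorem stmt6 (n k : ℕ) (hk : k ≤ n) (t φ : ℝ) (hφ : 0 < φ) :
    ∑ r ∈ Finset.range (n - k + 1), Real.exp (t * r) * spillage r n k φ =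
      Real.exp (t * (n - k : ℕ)) *
        ∑ ℓ ∈ Finset.range (n - k + 1),
          (n.choose ℓ : ℝ) * (Real.exp (-t) - 1) ^ ℓ *
            (φ ^ ℓ * ncS (n - ℓ) k φ / ncS n k φ) := by
  set X := Real.exp (-t) with hX
  set D := ncS n k φ with hD
  have key : ∑ ℓ ∈ Finset.range (n - k + 1),
      (n.choose ℓ : ℝ) * (X - 1) ^ ℓ * (φ ^ ℓ * ncS (n - ℓ) k φ) = ncS n k (X * φ) := by
    have := ncS_binomial n k hk (X - 1) φ
    rwa [sub_add_cancel] at this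
  unfold spillage
  calc ∑ r ∈ Finset.range (n - k + 1),
        Real.exp (t * r) * ((n.choose (k + r) : ℝ) * φ ^ (n - k - r) *
          (stirling2 (k + r) k : ℝ) / D)
      = ∑ r ∈ Finset.range (n - k + 1),
        Real.exp (t * (n - k : ℕ)) *
          ((n.choose (k + r) : ℝ) * (X * φ) ^ (n - k - r) *
            (stirling2 (k + r) k : ℝ)) / D := by
        apply Finset.sum_congr rfl
        intro r hr
        simp only [Finset.mem_range] at hr
        have hexp : Real.exp (t * r) = Real.exp (t * (n - k : ℕ)) * X ^ (n - k - r) := by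
          rw [hX, ← Real.exp_nat_mul, ← Real.exp_add]
          congr 1
          rw [Nat.cast_sub (show r ≤ n - k by omega)]
          ring
        rw [hexp, mul_pow]
        ring
    _ = Real.exp (t * (n - k : ℕ)) * ncS n k (X * φ) / D := by
        rw [← Finset.sum_div, ← Finset.mul_sum, spillage_num_sum n k hk (X * φ)]
    _ = Real.exp (t * (n - k : ℕ)) *
        (∑ ℓ ∈ Finset.range (n - k + 1),
          (n.choose ℓ : ℝ) * (X - 1) ^ ℓ * (φ ^ ℓ * ncS (n - ℓ) k φ)) / D := by
        rw [key]
    _ = Real.exp (t * (n - k : ℕ)) *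
        ∑ ℓ ∈ Finset.range (n - k + 1),
          (n.choose ℓ : ℝ) * (X - 1) ^ ℓ * (φ ^ ℓ * ncS (n - ℓ) k φ / D) := by
        rw [mul_div_assoc, Finset.sum_div, Finset.mul_sum, Finset.mul_sum]
        apply Finset.sum_congr rfl
        intro ℓ _
        ring
end

section
/- The mean of the spillage distribution is (n - k) - n·H_1, i.e., ∑_{r=0}^{n-k} r · Spillage(r | n, k, φ) = (n - k) - n · φ · S(n-1, k, φ)/S(n, k, φ), for k ≤ n and φ > 0. -/
open Finset Filter Real

lemma stirling2_eq_zero : ∀ n k, n < k → stirling2 n k = 0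
  | 0, _ + 1, _ => rfl
  | n + 1, k + 1, h => by
    simp [stirling2, stirling2_eq_zero n (k + 1) (by omega),
      stirling2_eq_zero n k (by omega)]

lemma stirling2_self (k : ℕ) : stirling2 k k = 1 := by
  induction k with
  | zero => rfl
  | succ k ih => simp [stirling2, ih, stirling2_eq_zero k (k + 1) (by omega)]

lemma ncS_pos (n k : ℕ) (hk : k ≤ n) (φ : ℝ) (hφ : 0 < φ) : 0 < ncS n k φ := by
  apply Finset.sum_pos'
  · intro j _; positivity
  · refine ⟨k, Finset.mem_range.mpr (by omega), ?_⟩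
    rw [stirling2_self]
    have h := Nat.choose_pos hk
    positivity

theorem stmt7 (n k : ℕ) (hk : k ≤ n) (φ : ℝ) (hφ : 0 < φ) :
    ∑ r ∈ Finset.range (n - k + 1), (r : ℝ) * spillage r n k φ =
      ((n : ℝ) - k) - (n : ℝ) * φ * ncS (n - 1) k φ / ncS n k φ := by
  have hD := ncS_pos n k hk φ hφ
  have hDne : ncS n k φ ≠ 0 := ne_of_gt hD
  rcases Nat.eq_zero_or_pos n with hn | hn
  · subst hn
    interval_cases k
    simp [spillage]
  obtain ⟨m, rfl⟩ : ∃ m, n = m + 1 := ⟨n - 1, by omega⟩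
  have hm1 : m + 1 - 1 = m := rfl
  have key : ∑ r ∈ Finset.range (m + 1 - k + 1),
      (r : ℝ) * (((m + 1).choose (k + r) : ℝ) * φ ^ (m + 1 - k - r) * (stirling2 (k + r) k : ℝ))
      = (((m : ℝ) + 1) - k) * ncS (m + 1) k φ - ((m : ℝ) + 1) * φ * ncS m k φ := by
    have h1 : ∑ r ∈ Finset.range (m + 1 - k + 1),
        (r : ℝ) * (((m + 1).choose (k + r) : ℝ) * φ ^ (m + 1 - k - r) * (stirling2 (k + r) k : ℝ))
        = ∑ j ∈ Finset.Ico k (m + 1 + 1),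
            ((j : ℝ) - k) * (((m + 1).choose j : ℝ) * φ ^ (m + 1 - j) * (stirling2 j k : ℝ)) := by
      rw [Finset.sum_Ico_eq_sum_range, show m + 1 + 1 - k = m + 1 - k + 1 by omega]
      refine Finset.sum_congr rfl fun r hr => ?_
      rw [show m + 1 - k - r = m + 1 - (k + r) by omega]
      push_cast
      ring
    have h2 : ∑ j ∈ Finset.Ico k (m + 1 + 1),
        ((j : ℝ) - k) * (((m + 1).choose j : ℝ) * φ ^ (m + 1 - j) * (stirling2 j k : ℝ))
        = ∑ j ∈ Finset.range (m + 1 + 1),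
            ((j : ℝ) - k) * (((m + 1).choose j : ℝ) * φ ^ (m + 1 - j) * (stirling2 j k : ℝ)) := by
      rw [Finset.range_eq_Ico,
        ← Finset.sum_Ico_consecutive _ (Nat.zero_le k) (show k ≤ m + 1 + 1 by omega)]
      have hz : ∑ j ∈ Finset.Ico 0 k,
          ((j : ℝ) - k) * (((m + 1).choose j : ℝ) * φ ^ (m + 1 - j) * (stirling2 j k : ℝ)) = 0 :=
        Finset.sum_eq_zero fun j hj => by
          rw [stirling2_eq_zero j k (Finset.mem_Ico.mp hj).2]
          simp
      rw [hz, zero_add]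
    have h4 : ∑ j ∈ Finset.range (m + 1 + 1),
        (((m : ℝ) + 1) - j) * (((m + 1).choose j : ℝ) * φ ^ (m + 1 - j) * (stirling2 j k : ℝ))
        = ((m : ℝ) + 1) * φ * ncS m k φ := by
      rw [Finset.sum_range_succ]
      have hz : ((m : ℝ) + 1) - ((m + 1 : ℕ) : ℝ) = 0 := by push_cast; ring
      rw [hz, zero_mul, add_zero, ncS, Finset.mul_sum]
      refine Finset.sum_congr rfl fun j hj => ?_
      have hj' : j ≤ m := Nat.lt_succ_iff.mp (Finset.mem_range.mp hj)
      have hc : ((m.choose j * (m + 1) : ℕ) : ℝ) = (((m + 1).choose j * (m + 1 - j) : ℕ) : ℝ) := by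
        exact_mod_cast congrArg (fun x : ℕ => (x : ℝ)) (Nat.choose_mul_succ_eq m j)
      rw [Nat.cast_mul, Nat.cast_mul, Nat.cast_sub (show j ≤ m + 1 by omega)] at hc
      push_cast at hc
      have hp : φ ^ (m + 1 - j) = φ * φ ^ (m - j) := by
        rw [show m + 1 - j = (m - j) + 1 by omega, pow_succ]; ring
      rw [hp]
      linear_combination (-(φ * φ ^ (m - j) * (stirling2 j k : ℝ))) * hc
    have h3 : ∑ j ∈ Finset.range (m + 1 + 1),
        ((j : ℝ) - k) * (((m + 1).choose j : ℝ) * φ ^ (m + 1 - j) * (stirling2 j k : ℝ))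
        = (((m : ℝ) + 1) - k) * ncS (m + 1) k φ
          - ∑ j ∈ Finset.range (m + 1 + 1),
              (((m : ℝ) + 1) - j) * (((m + 1).choose j : ℝ) * φ ^ (m + 1 - j) * (stirling2 j k : ℝ)) := by
      rw [ncS, Finset.mul_sum, ← Finset.sum_sub_distrib]
      refine Finset.sum_congr rfl fun j hj => ?_
      ring
    rw [h1, h2, h3, h4]
  have hs : ∑ r ∈ Finset.range (m + 1 - k + 1), (r : ℝ) * spillage r (m + 1) k φ
      = (∑ r ∈ Finset.range (m + 1 - k + 1),
          (r : ℝ) * (((m + 1).choose (k + r) : ℝ) * φ ^ (m + 1 - k - r) * (stirling2 (k + r) k : ℝ)))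
        / ncS (m + 1) k φ := by
    rw [Finset.sum_div]
    exact Finset.sum_congr rfl fun r _ => by rw [spillage]; ring
  rw [hs, key]
  simp only [Nat.add_sub_cancel]
  push_cast
  field_simp
end

section
/- For fixed k ≥ 1 and ℓ ≥ 0, the noncentral Stirling numbers satisfy the identity S(n - ℓ, k, φ) = S(n, k, φ)/(k + φ)^ℓ - ∑_{r=1}^{ℓ} (k + φ)^{r-ℓ-1} · S(n - r, k - 1, φ), whenever n ≥ ℓ and k + φ ≠ 0. -/
open Finset Filter Real

lemma ncS_rec (m k' : ℕ) (φ : ℝ) :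
    ncS (m+1) (k'+1) φ = (((k':ℝ)+1)+φ) * ncS m (k'+1) φ + ncS m k' φ := by
  have hsplit : ∀ j ∈ Finset.range (m+1),
      (((m+1).choose (j+1) : ℝ)) * φ^(m+1-(j+1)) * (stirling2 (j+1) (k'+1) : ℝ)
      = (((k':ℝ)+1) * ((m.choose j : ℝ) * φ^(m-j) * (stirling2 j (k'+1):ℝ))
          + (m.choose j : ℝ)*φ^(m-j)*(stirling2 j k' : ℝ))
        + ((m.choose (j+1) : ℝ)) * φ^(m-j) * (stirling2 (j+1) (k'+1) : ℝ) := by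
    intro j hj
    have h1 : (m+1).choose (j+1) = m.choose j + m.choose (j+1) := by
      exact Nat.choose_succ_succ m j
    have h2 : stirling2 (j+1) (k'+1) = (k'+1) * stirling2 j (k'+1) + stirling2 j k' := rfl
    have h3 : m+1-(j+1) = m - j := by omega
    rw [h1, h3, h2]
    push_cast
    try ring
  have hc : ∑ j ∈ Finset.range (m+1), ((m.choose (j+1) : ℝ)) * φ^(m-j) * (stirling2 (j+1) (k'+1) : ℝ)
      = φ * ncS m (k'+1) φ := by
    have e1 : ∀ j ∈ Finset.range (m+1), ((m.choose (j+1) : ℝ)) * φ^(m-j) * (stirling2 (j+1) (k'+1) : ℝ)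
        = (m.choose (j+1) : ℝ) * φ^(m+1-(j+1)) * (stirling2 (j+1) (k'+1) : ℝ) := by
      intro j hj; congr 2; congr 1; omega
    rw [Finset.sum_congr rfl e1]
    have h := Finset.sum_range_succ' (fun j => (m.choose j : ℝ) * φ^(m+1-j) * (stirling2 j (k'+1) : ℝ)) (m+1)
    have h2' : ∑ j ∈ Finset.range (m+1), (m.choose (j+1) : ℝ) * φ^(m+1-(j+1)) * (stirling2 (j+1) (k'+1) : ℝ)
        = (∑ j ∈ Finset.range (m+2), (m.choose j : ℝ) * φ^(m+1-j) * (stirling2 j (k'+1) : ℝ))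
          - (m.choose 0 : ℝ) * φ^(m+1-0) * (stirling2 0 (k'+1) : ℝ) := by
      linarith
    rw [h2', Finset.sum_range_succ]
    simp [stirling2, ncS, Finset.mul_sum]
    apply Finset.sum_congr rfl
    intro j hj
    have hjm : j ≤ m := by simpa using Nat.lt_succ_iff.mp (Finset.mem_range.mp hj)
    have : m + 1 - j = (m - j) + 1 := by omega
    rw [this, pow_succ]
    ring
  unfold ncS
  rw [Finset.sum_range_succ' _ (m+1), Finset.sum_congr rfl hsplit, Finset.sum_add_distrib,
    Finset.sum_add_distrib, hc, ← Finset.mul_sum]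
  simp only [ncS]
  norm_num [stirling2]
  ring

lemma ncS_rec' (m k : ℕ) (hk : 1 ≤ k) (φ : ℝ) :
    ncS (m+1) k φ = ((k:ℝ)+φ) * ncS m k φ + ncS m (k-1) φ := by
  obtain ⟨k', rfl⟩ : ∃ k', k = k'+1 := ⟨k-1, by omega⟩
  have := ncS_rec m k' φ
  push_cast
  simpa using this

lemma aux9 (n k ℓ : ℕ) (hk : 1 ≤ k) (hn : ℓ ≤ n) (φ : ℝ) :
    ((k:ℝ)+φ)^ℓ * ncS (n-ℓ) k φ
      = ncS n k φ - ∑ r ∈ Finset.Icc 1 ℓ, ((k:ℝ)+φ)^(r-1) * ncS (n-r) (k-1) φ := by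
  induction ℓ with
  | zero => simp
  | succ ℓ ih =>
    have hℓ : ℓ ≤ n := by omega
    have ih' := ih hℓ
    have hrec : ncS (n-ℓ) k φ = ((k:ℝ)+φ) * ncS (n-(ℓ+1)) k φ + ncS (n-(ℓ+1)) (k-1) φ := by
      have h : n - ℓ = (n-(ℓ+1)) + 1 := by omega
      rw [h]; exact ncS_rec' _ k hk φ
    rw [Finset.sum_Icc_succ_top (by omega : 1 ≤ ℓ+1)]
    have hss : ℓ + 1 - 1 = ℓ := rfl
    rw [hss]
    rw [hrec] at ih'
    rw [pow_succ]
    linear_combination ih'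

theorem stmt9 (n k ℓ : ℕ) (hk : 1 ≤ k) (hn : ℓ ≤ n) (φ : ℝ) (hkφ : (k : ℝ) + φ ≠ 0) :
    ncS (n - ℓ) k φ =
      ncS n k φ / ((k : ℝ) + φ) ^ ℓ -
        ∑ r ∈ Finset.Icc 1 ℓ,
          ((k : ℝ) + φ) ^ ((r : ℤ) - (ℓ : ℤ) - 1) * ncS (n - r) (k - 1) φ := by
  have hP : ((k:ℝ)+φ)^ℓ ≠ 0 := pow_ne_zero _ hkφ
  have h := aux9 n k ℓ hk hn φ
  have hterm : ∀ r ∈ Finset.Icc 1 ℓ,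
      ((k : ℝ) + φ) ^ ((r : ℤ) - (ℓ : ℤ) - 1) * ncS (n - r) (k - 1) φ
      = (((k:ℝ)+φ)^(r-1) * ncS (n-r) (k-1) φ) / ((k:ℝ)+φ)^ℓ := by
    intro r hr
    obtain ⟨hr1, hr2⟩ := Finset.mem_Icc.mp hr
    have he : (r:ℤ) - ℓ - 1 = ((r-1:ℕ):ℤ) - (ℓ:ℤ) := by omega
    rw [he, zpow_sub₀ hkφ, zpow_natCast, zpow_natCast]
    ring
  rw [Finset.sum_congr rfl hterm, ← Finset.sum_div, ← sub_div, eq_div_iff hP]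
  linear_combination h
end
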